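/- Let a ∈ ℝ, M := {(z¹, z²) ∈ ℂ² : |Re z¹| < 1 and |z²| < 1}, and ρ_a(z¹, z²) := 2(Re z¹ + 1)^a (Re z² + 1)^{1−a}. Then at every point of M the complex Hessian of ρ_a is degenerate: ρ_{11̄}·ρ_{22̄} − ρ_{12̄}·ρ_{21̄} = 0, where ρ_{jk̄} denotes the iterated Wirtinger derivative ∂²ρ_a/∂z^j∂z̄^k. Moreover, if a ∉ {0, 1} then ρ_{11̄}(z) ≠ 0 at every z ∈ M, so the Hermitian matrix (ρ_{jk̄}(z)) has rank exactly 1 at every point of M. -/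

import Mathlib

/-- Wirtinger derivative `∂f/∂z^j`. -/
noncomputable def wD {n : ℕ} (f : (Fin n → ℂ) → ℂ) (j : Fin n) (x : Fin n → ℂ) : ℂ :=
  (fderiv ℝ f x (Pi.single j 1) - Complex.I * fderiv ℝ f x (Pi.single j Complex.I)) / 2

/-- Wirtinger derivative `∂f/∂z̄^j`. -/
noncomputable def wDbar {n : ℕ} (f : (Fin n → ℂ) → ℂ) (j : Fin n) (x : Fin n → ℂ) : ℂ :=
  (fderiv ℝ f x (Pi.single j 1) + Complex.I * fderiv ℝ f x (Pi.single j Complex.I)) / 2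

/-- Iterated Wirtinger derivative `f_{jk̄} = ∂²f/∂z^j∂z̄^k`. -/
noncomputable def w2 {n : ℕ} (f : (Fin n → ℂ) → ℂ) (j k : Fin n) (x : Fin n → ℂ) : ℂ :=
  wD (fun y => wDbar f k y) j x

/-- The potential `ρ_a(z) = 2(Re z¹ + 1)^a (Re z² + 1)^{1−a}` (real powers). -/
noncomputable def rhoA (a : ℝ) (z : Fin 2 → ℂ) : ℝ :=
  2 * ((z 0).re + 1) ^ a * ((z 1).re + 1) ^ (1 - a)

/-- `ρ_a` as a complex-valued function. -/
noncomputable def rhoAC (a : ℝ) : (Fin 2 → ℂ) → ℂ := fun z => ((rhoA a z : ℝ) : ℂ)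

/-- The domain `M = {|Re z¹| < 1, |z²| < 1}`. -/
def MSet : Set (Fin 2 → ℂ) := {z | |(z 0).re| < 1 ∧ ‖z 1‖ < 1}

noncomputable def Phi (c p q : ℝ) : (Fin 2 → ℂ) → ℂ :=
  fun y => ((c * ((y 0).re + 1) ^ p * ((y 1).re + 1) ^ q : ℝ) : ℂ)

def USet : Set (Fin 2 → ℂ) := {y | 0 < (y 0).re + 1 ∧ 0 < (y 1).re + 1}

lemma isOpen_USet : IsOpen USet := by
  have h0 : Continuous fun y : Fin 2 → ℂ => (y 0).re + 1 :=
    ((Complex.continuous_re.comp (continuous_apply 0)).add continuous_const)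
  have h1 : Continuous fun y : Fin 2 → ℂ => (y 1).re + 1 :=
    ((Complex.continuous_re.comp (continuous_apply 1)).add continuous_const)
  exact (isOpen_lt continuous_const h0).inter (isOpen_lt continuous_const h1)

lemma fderiv_Phi (c p q : ℝ) {y : Fin 2 → ℂ} (h0 : 0 < (y 0).re + 1) (h1 : 0 < (y 1).re + 1)
    (w : Fin 2 → ℂ) :
    fderiv ℝ (Phi c p q) y w =
      ((c * p * ((y 0).re + 1) ^ (p-1) * ((y 1).re + 1) ^ q * (w 0).re
        + c * q * ((y 0).re + 1) ^ p * ((y 1).re + 1) ^ (q-1) * (w 1).re : ℝ) : ℂ) := by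
  have hu : HasFDerivAt (fun y : Fin 2 → ℂ => (y 0).re + 1)
      (Complex.reCLM.comp (ContinuousLinearMap.proj 0)) y := by
    simpa using ((Complex.reCLM.comp
      ((ContinuousLinearMap.proj 0) : (Fin 2 → ℂ) →L[ℝ] ℂ)).hasFDerivAt (x := y)).add_const 1
  have hv : HasFDerivAt (fun y : Fin 2 → ℂ => (y 1).re + 1)
      (Complex.reCLM.comp (ContinuousLinearMap.proj 1)) y := by
    simpa using ((Complex.reCLM.comp
      ((ContinuousLinearMap.proj 1) : (Fin 2 → ℂ) →L[ℝ] ℂ)).hasFDerivAt (x := y)).add_const 1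
  have hup := hu.rpow_const (p := p) (Or.inl h0.ne')
  have hvq := hv.rpow_const (p := q) (Or.inl h1.ne')
  have H := (hup.const_mul c).mul hvq
  have H2 := Complex.ofRealCLM.hasFDerivAt.comp y H
  have H3 : HasFDerivAt (Phi c p q) _ y := H2
  rw [H3.fderiv]
  simp [mul_comm, mul_assoc]
  ring

lemma wD_Phi0 (c p q : ℝ) {y : Fin 2 → ℂ} (h0 : 0 < (y 0).re + 1) (h1 : 0 < (y 1).re + 1) :
    wD (Phi c p q) 0 y = Phi (c*p/2) (p-1) q y := by
  unfold wD
  rw [fderiv_Phi c p q h0 h1, fderiv_Phi c p q h0 h1]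
  simp [Phi, Pi.single_apply]
  ring

lemma wD_Phi1 (c p q : ℝ) {y : Fin 2 → ℂ} (h0 : 0 < (y 0).re + 1) (h1 : 0 < (y 1).re + 1) :
    wD (Phi c p q) 1 y = Phi (c*q/2) p (q-1) y := by
  unfold wD
  rw [fderiv_Phi c p q h0 h1, fderiv_Phi c p q h0 h1]
  simp [Phi, Pi.single_apply]
  ring

lemma wDbar_Phi0 (c p q : ℝ) {y : Fin 2 → ℂ} (h0 : 0 < (y 0).re + 1) (h1 : 0 < (y 1).re + 1) :
    wDbar (Phi c p q) 0 y = Phi (c*p/2) (p-1) q y := by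
  unfold wDbar
  rw [fderiv_Phi c p q h0 h1, fderiv_Phi c p q h0 h1]
  simp [Phi, Pi.single_apply]
  ring

lemma wDbar_Phi1 (c p q : ℝ) {y : Fin 2 → ℂ} (h0 : 0 < (y 0).re + 1) (h1 : 0 < (y 1).re + 1) :
    wDbar (Phi c p q) 1 y = Phi (c*q/2) p (q-1) y := by
  unfold wDbar
  rw [fderiv_Phi c p q h0 h1, fderiv_Phi c p q h0 h1]
  simp [Phi, Pi.single_apply]
  ring

lemma wD_congr {g g' : (Fin 2 → ℂ) → ℂ} {z : Fin 2 → ℂ} (h : g =ᶠ[nhds z] g') (j : Fin 2) :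
    wD g j z = wD g' j z := by
  unfold wD; rw [h.fderiv_eq]

lemma w2_Phi00 (c p q : ℝ) {z : Fin 2 → ℂ} (hz : z ∈ USet) :
    w2 (Phi c p q) 0 0 z = Phi (c*p/2*(p-1)/2) (p-2) q z := by
  have hev : (fun y => wDbar (Phi c p q) 0 y) =ᶠ[nhds z] Phi (c*p/2) (p-1) q :=
    Filter.eventuallyEq_of_mem (isOpen_USet.mem_nhds hz) (fun y hy => wDbar_Phi0 c p q hy.1 hy.2)
  rw [show w2 (Phi c p q) 0 0 z = wD (fun y => wDbar (Phi c p q) 0 y) 0 z from rfl,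
    wD_congr hev 0, wD_Phi0 _ _ _ hz.1 hz.2,
    show p - 1 - 1 = p - 2 from by ring]

lemma w2_Phi10 (c p q : ℝ) {z : Fin 2 → ℂ} (hz : z ∈ USet) :
    w2 (Phi c p q) 1 0 z = Phi (c*p/2*q/2) (p-1) (q-1) z := by
  have hev : (fun y => wDbar (Phi c p q) 0 y) =ᶠ[nhds z] Phi (c*p/2) (p-1) q :=
    Filter.eventuallyEq_of_mem (isOpen_USet.mem_nhds hz) (fun y hy => wDbar_Phi0 c p q hy.1 hy.2)
  rw [show w2 (Phi c p q) 1 0 z = wD (fun y => wDbar (Phi c p q) 0 y) 1 z from rfl,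
    wD_congr hev 1, wD_Phi1 _ _ _ hz.1 hz.2]

lemma w2_Phi01 (c p q : ℝ) {z : Fin 2 → ℂ} (hz : z ∈ USet) :
    w2 (Phi c p q) 0 1 z = Phi (c*q/2*p/2) (p-1) (q-1) z := by
  have hev : (fun y => wDbar (Phi c p q) 1 y) =ᶠ[nhds z] Phi (c*q/2) p (q-1) :=
    Filter.eventuallyEq_of_mem (isOpen_USet.mem_nhds hz) (fun y hy => wDbar_Phi1 c p q hy.1 hy.2)
  rw [show w2 (Phi c p q) 0 1 z = wD (fun y => wDbar (Phi c p q) 1 y) 0 z from rfl,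
    wD_congr hev 0, wD_Phi0 _ _ _ hz.1 hz.2]

lemma w2_Phi11 (c p q : ℝ) {z : Fin 2 → ℂ} (hz : z ∈ USet) :
    w2 (Phi c p q) 1 1 z = Phi (c*q/2*(q-1)/2) p (q-2) z := by
  have hev : (fun y => wDbar (Phi c p q) 1 y) =ᶠ[nhds z] Phi (c*q/2) p (q-1) :=
    Filter.eventuallyEq_of_mem (isOpen_USet.mem_nhds hz) (fun y hy => wDbar_Phi1 c p q hy.1 hy.2)
  rw [show w2 (Phi c p q) 1 1 z = wD (fun y => wDbar (Phi c p q) 1 y) 1 z from rfl,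
    wD_congr hev 1, wD_Phi1 _ _ _ hz.1 hz.2,
    show q - 1 - 1 = q - 2 from by ring]

/-- At every point of `M`, the complex Hessian of `ρ_a` is degenerate, and for `a ∉ {0,1}`
one has `ρ_{11̄} ≠ 0`, so the Hermitian matrix `(ρ_{jk̄})` has rank exactly 1. -/
theorem stmt6 (a : ℝ) (z : Fin 2 → ℂ) (hz : z ∈ MSet) :
    w2 (rhoAC a) 0 0 z * w2 (rhoAC a) 1 1 z
      - w2 (rhoAC a) 0 1 z * w2 (rhoAC a) 1 0 z = 0 ∧
    (a ≠ 0 → a ≠ 1 →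
      w2 (rhoAC a) 0 0 z ≠ 0 ∧
      (Matrix.of fun j k : Fin 2 => w2 (rhoAC a) j k z).rank = 1) := by
  obtain ⟨hz0, hz1⟩ := hz
  have hU : z ∈ USet := by
    constructor
    · linarith [(abs_lt.mp hz0).1]
    · have h := Complex.abs_re_le_norm (z 1)
      have : |(z 1).re| < 1 := lt_of_le_of_lt h hz1
      linarith [(abs_lt.mp this).1]
  have hu : 0 < (z 0).re + 1 := hU.1
  have hv : 0 < (z 1).re + 1 := hU.2
  set u : ℝ := (z 0).re + 1 with hu_def
  set v : ℝ := (z 1).re + 1 with hv_def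
  have hrho : rhoAC a = Phi 2 a (1-a) := rfl
  have E00 : w2 (rhoAC a) 0 0 z = Phi (2*a/2*(a-1)/2) (a-2) (1-a) z := by
    rw [hrho]; exact w2_Phi00 2 a (1-a) hU
  have E10 : w2 (rhoAC a) 1 0 z = Phi (2*a/2*(1-a)/2) (a-1) ((1-a)-1) z := by
    rw [hrho]; exact w2_Phi10 2 a (1-a) hU
  have E01 : w2 (rhoAC a) 0 1 z = Phi (2*(1-a)/2*a/2) (a-1) ((1-a)-1) z := by
    rw [hrho]; exact w2_Phi01 2 a (1-a) hU
  have E11 : w2 (rhoAC a) 1 1 z = Phi (2*(1-a)/2*((1-a)-1)/2) a ((1-a)-2) z := by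
    rw [hrho]; exact w2_Phi11 2 a (1-a) hU
  -- rpow splitting facts
  have e1 : u ^ (a-2) = u ^ (a-1) * u⁻¹ := by
    rw [← Real.rpow_neg_one u, ← Real.rpow_add hu]; ring_nf
  have e2 : u ^ a = u ^ (a-1) * u := by
    nth_rewrite 1 [show a = (a-1)+1 by ring]
    rw [Real.rpow_add hu, Real.rpow_one]
  have e3 : v ^ (1-a) = v ^ (-a) * v := by
    nth_rewrite 1 [show 1-a = -a+1 by ring]
    rw [Real.rpow_add hv, Real.rpow_one]
  have e4 : v ^ ((1-a)-2) = v ^ (-a) * v⁻¹ := by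
    rw [← Real.rpow_neg_one v, ← Real.rpow_add hv]; ring_nf
  have e5 : v ^ ((1-a)-1) = v ^ (-a) := by norm_num
  have hdet : w2 (rhoAC a) 0 0 z * w2 (rhoAC a) 1 1 z
      - w2 (rhoAC a) 0 1 z * w2 (rhoAC a) 1 0 z = 0 := by
    rw [E00, E01, E10, E11]
    unfold Phi
    rw [← hu_def, ← hv_def]
    norm_cast
    rw [e1, e2, e3, e4, e5]
    field_simp
    ring
  refine ⟨hdet, fun ha0 ha1 => ?_⟩
  have hC1 : 2*a/2*(a-1)/2 ≠ 0 := by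
    have : a - 1 ≠ 0 := sub_ne_zero.mpr ha1
    positivity
  have hne : w2 (rhoAC a) 0 0 z ≠ 0 := by
    rw [E00]
    unfold Phi
    rw [← hu_def, ← hv_def]
    simp only [Complex.ofReal_ne_zero]
    positivity
  refine ⟨hne, ?_⟩
  set M : Matrix (Fin 2) (Fin 2) ℂ := Matrix.of fun j k : Fin 2 => w2 (rhoAC a) j k z with hM
  have hM00 : M 0 0 ≠ 0 := hne
  have hdet' : M 0 0 * M 1 1 - M 0 1 * M 1 0 = 0 := hdet
  -- factor M = X * Y
  have hfac : M = (Matrix.of fun (i : Fin 2) (_ : Fin 1) => M i 0) *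
      (Matrix.of fun (_ : Fin 1) (k : Fin 2) => M 0 k / M 0 0) := by
    ext i k
    fin_cases i <;> fin_cases k <;>
      simp [Matrix.mul_apply, Fin.sum_univ_two] <;>
      field_simp <;> linear_combination hdet'
  have hle : M.rank ≤ 1 := by
    rw [hfac]
    refine le_trans (Matrix.rank_mul_le_right _ _) ?_
    simpa using Matrix.rank_le_card_height (Matrix.of fun (_ : Fin 1) (k : Fin 2) => M 0 k / M 0 0)
  have hpos : 0 < M.rank := by
    rw [Matrix.rank]
    rw [Module.finrank_pos_iff_exists_ne_zero]
    refine ⟨⟨M.mulVec (Pi.single 0 1), LinearMap.mem_range_self _ _⟩, ?_⟩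
    intro h
    apply hM00
    have h2 : M.mulVec (Pi.single 0 1) = 0 := by
      simpa using congrArg Subtype.val h
    have := congrFun h2 0
    simpa [Matrix.mulVec_single_one] using this
  omega
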